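/- Let γ* : [0,1] → ℝ be piecewise continuous with finitely many jumps and bounded, and let γ^{(n)} : [0,1] → ℝ converge uniformly to γ*. With k = ⌊θ√n⌋, m = ⌊n/(2k)⌋, and w_i = Σ_{|j|<k}(1-|j|/k)² ∫_{((2i-1)k+j-1)/n}^{((2i-1)k+j)/n} (γ^{(n)}_t)² dt, one has lim_{n→∞} Σ_{i=1}^m ∫_{(2i-2)k/n}^{2ik/n} | m·w_i - (γ*_s)²/3 | ds = 0. -/

import Mathlib

open Filter

/-- The triangular-kernel weighted block integral
`w_i = Σ_{|j|<k} (1 - |j|/k)² ∫_{((2i-1)k+j-1)/n}^{((2i-1)k+j)/n} γ_t² dt`. -/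
noncomputable def blockWeight (γ : ℝ → ℝ) (n k i : ℕ) : ℝ :=
  ∑ j ∈ Finset.Icc (-(k : ℤ) + 1) ((k : ℤ) - 1),
    (1 - ((|j| : ℤ) : ℝ) / (k : ℝ)) ^ 2 *
      ∫ t in ((((2 * (i : ℤ) - 1) * (k : ℤ) + j - 1 : ℤ) : ℝ) / (n : ℝ))..
          ((((2 * (i : ℤ) - 1) * (k : ℤ) + j : ℤ) : ℝ) / (n : ℝ)), (γ t) ^ 2

section Aux
open MeasureTheory intervalIntegral

lemma II_of_bdd {f : ℝ → ℝ} (hf : Measurable f) {B u v : ℝ}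
    (hb : ∀ t ∈ Set.uIcc u v, |f t| ≤ B) :
    IntervalIntegrable f MeasureTheory.volume u v := by
  rw [intervalIntegrable_iff]
  apply MeasureTheory.Measure.integrableOn_of_bounded (M := B) measure_Ioc_lt_top.ne
    hf.aestronglyMeasurable
  refine (MeasureTheory.ae_restrict_iff' measurableSet_Ioc).2 (Filter.Eventually.of_forall ?_)
  intro x hx
  exact hb x (Set.Ioc_subset_Icc_self hx)


lemma sum_range_sq' (n : ℕ) : ∑ i ∈ Finset.range n, (i:ℝ)^2 = n*(n-1)*(2*n-1)/6 := by
  induction n with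
  | zero => simp
  | succ n ih => rw [Finset.sum_range_succ, ih]; push_cast; ring

lemma shift_sq (a : ℕ) : ∑ l ∈ Finset.range a, (((l+1:ℕ)):ℝ)^2
    = ∑ l ∈ Finset.range (a+1), (l:ℝ)^2 := by
  rw [Finset.sum_range_succ' (fun l => (l:ℝ)^2) a]
  simp

lemma kernel_sum (k : ℕ) (hk : 1 ≤ k) :
    ∑ l ∈ Finset.range (2*k-1), (1 - |(l:ℝ) - ((k:ℝ)-1)|/(k:ℝ))^2
      = (2*(k:ℝ)^2+1)/(3*(k:ℝ)) := by
  have hK : (0:ℝ) < (k:ℝ) := by exact_mod_cast hk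
  have h2k : 2*k-1 = k + (k-1) := by omega
  rw [h2k, Finset.sum_range_add]
  have e1 : ∀ l ∈ Finset.range k, (1 - |(l:ℝ) - ((k:ℝ)-1)|/(k:ℝ))^2
      = (((l+1:ℕ)):ℝ)^2/(k:ℝ)^2 := by
    intro l hl
    have hl' : (l:ℝ) ≤ (k:ℝ) - 1 := by
      have : (l:ℝ) + 1 ≤ (k:ℝ) := by exact_mod_cast Finset.mem_range.1 hl
      linarith
    rw [abs_of_nonpos (by linarith)]
    push_cast
    field_simp
    ring
  have e2 : ∀ l ∈ Finset.range (k-1), (1 - |((k+l:ℕ):ℝ) - ((k:ℝ)-1)|/(k:ℝ))^2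
      = (((k-1-l:ℕ)):ℝ)^2/(k:ℝ)^2 := by
    intro l hl
    have hlk : l < k - 1 := Finset.mem_range.1 hl
    have c1 : ((k+l:ℕ):ℝ) = (k:ℝ) + l := by push_cast; ring
    have c2 : (((k-1-l:ℕ)):ℝ) = (k:ℝ) - 1 - l := by
      rw [Nat.cast_sub (by omega : l ≤ k - 1), Nat.cast_sub hk, Nat.cast_one]
    rw [c1, abs_of_nonneg (by linarith), c2]
    field_simp
    ring
  rw [Finset.sum_congr rfl e1, Finset.sum_congr rfl e2]
  rw [← Finset.sum_div, ← Finset.sum_div, shift_sq]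
  have hrefl : ∑ l ∈ Finset.range (k-1), (((k-1-l:ℕ)):ℝ)^2
      = ∑ l ∈ Finset.range (k-1), (((l+1:ℕ)):ℝ)^2 := by
    rw [← Finset.sum_range_reflect (fun j => (((j+1:ℕ)):ℝ)^2) (k-1)]
    refine Finset.sum_congr rfl fun l hl => ?_
    have hlk : l < k - 1 := Finset.mem_range.1 hl
    congr 2
    omega
  rw [hrefl, shift_sq]
  have hk1 : k - 1 + 1 = k := by omega
  rw [hk1, sum_range_sq', sum_range_sq']
  push_cast
  field_simp
  ring

lemma blockWeight_eq (γ : ℝ → ℝ) (n k i : ℕ) (hk : 1 ≤ k) :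
    blockWeight γ n k i = ∑ l ∈ Finset.range (2*k-1),
      (1 - |(l:ℝ) - ((k:ℝ)-1)|/(k:ℝ))^2 *
        ∫ t in (((2*(i:ℝ)-2)*(k:ℝ) + l)/(n:ℝ))..(((2*(i:ℝ)-2)*(k:ℝ) + (l+1))/(n:ℝ)),
          (γ t)^2 := by
  unfold blockWeight
  refine Finset.sum_nbij' (i := fun j => (j + ((k:ℤ)-1)).toNat) (j := fun l => (l:ℤ) - ((k:ℤ)-1))
    ?_ ?_ ?_ ?_ ?_
  · intro j hj
    simp only [Finset.mem_Icc] at hj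
    simp only [Finset.mem_range]
    omega
  · intro l hl
    simp only [Finset.mem_range] at hl
    simp only [Finset.mem_Icc]
    omega
  · intro j hj
    simp only [Finset.mem_Icc] at hj
    omega
  · intro l hl
    simp only [Finset.mem_range] at hl
    omega
  · intro j hj
    simp only [Finset.mem_Icc] at hj
    have hc : (((j + ((k:ℤ)-1)).toNat : ℕ) : ℝ) = (j:ℝ) + (k:ℝ) - 1 := by
      have : ((j + ((k:ℤ)-1)).toNat : ℤ) = j + ((k:ℤ)-1) := Int.toNat_of_nonneg (by omega)
      have h2 : (((j + ((k:ℤ)-1)).toNat : ℕ) : ℝ) = (((j + ((k:ℤ)-1) : ℤ)) : ℝ) := by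
        exact_mod_cast congrArg (fun z : ℤ => (z : ℝ)) this
      rw [h2]; push_cast; ring
    have hcoef : (1 - ((|j| : ℤ) : ℝ) / (k : ℝ)) ^ 2
        = (1 - |(((j + ((k:ℤ)-1)).toNat : ℕ):ℝ) - ((k:ℝ)-1)|/(k:ℝ))^2 := by
      rw [hc]
      congr 3
      rw [Int.cast_abs]
      congr 1
      ring
    have hlo : (((2 * (i : ℤ) - 1) * (k : ℤ) + j - 1 : ℤ) : ℝ) / (n : ℝ)
        = ((2*(i:ℝ)-2)*(k:ℝ) + (((j + ((k:ℤ)-1)).toNat : ℕ):ℝ))/(n:ℝ) := by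
      rw [hc]; push_cast; ring_nf
    have hhi : (((2 * (i : ℤ) - 1) * (k : ℤ) + j : ℤ) : ℝ) / (n : ℝ)
        = ((2*(i:ℝ)-2)*(k:ℝ) + ((((j + ((k:ℤ)-1)).toNat : ℕ):ℝ)+1))/(n:ℝ) := by
      rw [hc]; push_cast; ring_nf
    rw [hcoef, hlo, hhi]


set_option maxHeartbeats 4000000 in
lemma main_bound (γs φ h : ℝ → ℝ) (C ε1 ε2 ε3 : ℝ)
    (hγm : Measurable γs) (hφm : Measurable φ) (hh : Continuous h)
    (hCnn : 0 ≤ C) (hε1 : 0 ≤ ε1) (hε2 : 0 ≤ ε2) (hε3 : 0 ≤ ε3)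
    (hγb : ∀ t ∈ Set.Icc (0:ℝ) 1, |γs t| ≤ C)
    (hfg : ∀ t ∈ Set.Icc (0:ℝ) 1, |(φ t)^2 - (γs t)^2| ≤ ε1)
    (n k m : ℕ) (hk : 1 ≤ k) (hm : 1 ≤ m) (hkm : 2*k*m ≤ n) (hkm2 : n < 2*k*(m+1))
    (hδ : ∀ x y : ℝ, |x - y| ≤ 2*(k:ℝ)/(n:ℝ) → |h x - h y| ≤ ε2)
    (hgh : ∀ u v : ℝ, 0 ≤ u → u ≤ v → v ≤ 1 → (∫ t in u..v, |(γs t)^2 - h t|) ≤ ε3) :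
    ∑ i ∈ Finset.Icc 1 m, (∫ s in (((2 * (i : ℝ) - 2) * (k : ℝ)) / (n : ℝ))..
        ((2 * (i : ℝ) * (k : ℝ)) / (n : ℝ)),
        |(m:ℝ) * blockWeight φ n k i - (γs s) ^ 2 / 3|)
      ≤ ε1 + ε2 + (2*(k:ℝ)/(3*(n:ℝ)) + 1/(6*(k:ℝ)^2))*C^2 + 2*ε3 := by
  have hn1 : 1 ≤ n := le_trans (by nlinarith) hkm
  have hN : (0:ℝ) < (n:ℝ) := by exact_mod_cast hn1
  have hK : (0:ℝ) < (k:ℝ) := by exact_mod_cast hk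
  have hK1 : (1:ℝ) ≤ (k:ℝ) := by exact_mod_cast hk
  have hM : (0:ℝ) < (m:ℝ) := by exact_mod_cast hm
  have hkmR : 2*(k:ℝ)*(m:ℝ) ≤ (n:ℝ) := by exact_mod_cast hkm
  have hkm2R : (n:ℝ) < 2*(k:ℝ)*((m:ℝ)+1) := by exact_mod_cast hkm2
  -- abbreviations (not `set`, to keep syntactic match with cast lemmas)
  have herr0 : (0:ℝ) ≤ 2*(k:ℝ)/(3*(n:ℝ)) + 1/(6*(k:ℝ)^2) := by positivity
  have hA0 : (0:ℝ) ≤ ε1 + ε2 + (2*(k:ℝ)/(3*(n:ℝ)) + 1/(6*(k:ℝ)^2))*C^2 := by positivity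
  have hρ0 : (0:ℝ) ≤ (m:ℝ)*(2*(k:ℝ)^2+1)/(3*(k:ℝ)*(n:ℝ)) := by positivity
  have hMle : (m:ℝ) ≤ (n:ℝ)/(2*(k:ℝ)) := by
    rw [le_div_iff₀ (by positivity)]; nlinarith
  have hρup : (m:ℝ)*(2*(k:ℝ)^2+1)/(3*(k:ℝ)*(n:ℝ)) ≤ 1/3 + 1/(6*(k:ℝ)^2) := by
    rw [div_le_iff₀ (by positivity)]
    have key2 : (1/3 + 1/(6*(k:ℝ)^2))*(3*(k:ℝ)*(n:ℝ)) = (k:ℝ)*(n:ℝ) + (n:ℝ)/(2*(k:ℝ)) := by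
      field_simp; ring
    rw [key2]
    have h2 : 2*(k:ℝ)^2*(m:ℝ) ≤ (k:ℝ)*(n:ℝ) := by nlinarith
    have h3 : (m:ℝ) ≤ (n:ℝ)/(2*(k:ℝ)) := hMle
    nlinarith
  have hρlow : 1/3 - 2*(k:ℝ)/(3*(n:ℝ)) ≤ (m:ℝ)*(2*(k:ℝ)^2+1)/(3*(k:ℝ)*(n:ℝ)) := by
    rw [le_div_iff₀ (by positivity)]
    have key3 : (1/3 - 2*(k:ℝ)/(3*(n:ℝ)))*(3*(k:ℝ)*(n:ℝ)) = (k:ℝ)*(n:ℝ) - 2*(k:ℝ)^2 := by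
      field_simp
    rw [key3]
    have h4 : (k:ℝ)*(n:ℝ) < (k:ℝ)*(2*(k:ℝ)*((m:ℝ)+1)) := by
      exact mul_lt_mul_of_pos_left hkm2R hK
    nlinarith [hM.le, hK.le]
  have hρ1 : (m:ℝ)*(2*(k:ℝ)^2+1)/(3*(k:ℝ)*(n:ℝ)) ≤ 1 := by
    have : 1/(6*(k:ℝ)^2) ≤ 1/6 := by
      apply one_div_le_one_div_of_le (by norm_num)
      nlinarith
    linarith
  have hρerr : |(m:ℝ)*(2*(k:ℝ)^2+1)/(3*(k:ℝ)*(n:ℝ)) - 1/3|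
      ≤ 2*(k:ℝ)/(3*(n:ℝ)) + 1/(6*(k:ℝ)^2) := by
    rw [abs_le]
    constructor
    · have : (0:ℝ) ≤ 1/(6*(k:ℝ)^2) := by positivity
      linarith
    · have : (0:ℝ) ≤ 2*(k:ℝ)/(3*(n:ℝ)) := by positivity
      linarith
  -- integrability helpers
  have hsub : ∀ {u v : ℝ}, 0 ≤ u → u ≤ v → v ≤ 1 → Set.uIcc u v ⊆ Set.Icc (0:ℝ) 1 := by
    intro u v h0 huv h1'
    rw [Set.uIcc_of_le huv]
    exact Set.Icc_subset_Icc h0 h1'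
  have IIg : ∀ {u v : ℝ}, 0 ≤ u → u ≤ v → v ≤ 1 →
      IntervalIntegrable (fun t => (γs t)^2) MeasureTheory.volume u v := by
    intro u v h0 huv h1'
    refine II_of_bdd (hγm.pow_const 2) (B := C^2) ?_
    intro t ht
    have ht' := hsub h0 huv h1' ht
    rw [abs_pow]
    exact pow_le_pow_left₀ (abs_nonneg _) (hγb t ht') 2
  have IIφ : ∀ {u v : ℝ}, 0 ≤ u → u ≤ v → v ≤ 1 →
      IntervalIntegrable (fun t => (φ t)^2) MeasureTheory.volume u v := by
    intro u v h0 huv h1'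
    refine II_of_bdd (hφm.pow_const 2) (B := ε1 + C^2) ?_
    intro t ht
    have ht' := hsub h0 huv h1' ht
    have h2 : |(γs t)^2| ≤ C^2 := by
      rw [abs_pow]
      exact pow_le_pow_left₀ (abs_nonneg _) (hγb t ht') 2
    calc |(φ t)^2| = |(φ t)^2 - (γs t)^2 + (γs t)^2| := by rw [sub_add_cancel]
      _ ≤ |(φ t)^2 - (γs t)^2| + |(γs t)^2| := abs_add_le _ _
      _ ≤ ε1 + C^2 := add_le_add (hfg t ht') h2
  have IIgh : ∀ {u v : ℝ}, 0 ≤ u → u ≤ v → v ≤ 1 →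
      IntervalIntegrable (fun t => |(γs t)^2 - h t|) MeasureTheory.volume u v := by
    intro u v h0 huv h1'
    exact ((IIg h0 huv h1').sub (hh.intervalIntegrable _ _)).abs
  -- block endpoints
  have hp_nonneg : ∀ a : ℕ, 0 ≤ 2*(a:ℝ)*(k:ℝ)/(n:ℝ) := by intro a; positivity
  have hp_mono : ∀ a : ℕ, 2*(a:ℝ)*(k:ℝ)/(n:ℝ) ≤ 2*((a:ℝ)+1)*(k:ℝ)/(n:ℝ) := by
    intro a
    gcongr
    linarith

  have hp_le1 : ∀ a : ℕ, a ≤ m → 2*(a:ℝ)*(k:ℝ)/(n:ℝ) ≤ 1 := by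
    intro a ha
    rw [div_le_one hN]
    have : (a:ℝ) ≤ (m:ℝ) := by exact_mod_cast ha
    nlinarith
  have block : ∀ a : ℕ, a < m →
      (∫ s in (2*(a:ℝ)*(k:ℝ)/(n:ℝ))..(2*((a:ℝ)+1)*(k:ℝ)/(n:ℝ)),
          |(m:ℝ) * blockWeight φ n k (1+a) - (γs s)^2/3|)
        ≤ 2*(k:ℝ)/(n:ℝ) * (ε1 + ε2 + (2*(k:ℝ)/(3*(n:ℝ)) + 1/(6*(k:ℝ)^2))*C^2)
          + 2*(∫ s in (2*(a:ℝ)*(k:ℝ)/(n:ℝ))..(2*((a:ℝ)+1)*(k:ℝ)/(n:ℝ)),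
              |(γs s)^2 - h s|) := by
    intro a ha
    have haM : (a:ℝ) + 1 ≤ (m:ℝ) := by exact_mod_cast ha
    have hpa0 : 0 ≤ 2*(a:ℝ)*(k:ℝ)/(n:ℝ) := hp_nonneg a
    have hpab : 2*(a:ℝ)*(k:ℝ)/(n:ℝ) ≤ 2*((a:ℝ)+1)*(k:ℝ)/(n:ℝ) := hp_mono a
    have hpb1 : 2*((a:ℝ)+1)*(k:ℝ)/(n:ℝ) ≤ 1 := by
      rw [div_le_one hN]; nlinarith
    have h2k1 : ((2*k-1:ℕ):ℝ) = 2*(k:ℝ)-1 := by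
      rw [Nat.cast_sub (by omega : 1 ≤ 2*k)]; push_cast; ring
    set e : ℕ → ℝ := fun l => (2*(a:ℝ)*(k:ℝ) + (l:ℝ))/(n:ℝ) with he
    have he_mono : ∀ l : ℕ, e l ≤ e (l+1) := by
      intro l; simp only [he]
      gcongr
      push_cast; linarith
    have he_nonneg : ∀ l : ℕ, 0 ≤ e l := by intro l; simp only [he]; positivity
    have he_le1 : ∀ l : ℕ, l ≤ 2*k-1 → e l ≤ 1 := by
      intro l hl
      simp only [he]; rw [div_le_one hN]
      have hlr : (l:ℝ) ≤ 2*(k:ℝ)-1 := by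
        have h' : (l:ℝ) ≤ ((2*k-1:ℕ):ℝ) := by exact_mod_cast hl
        rw [h2k1] at h'; exact h'
      nlinarith
    have he0 : e 0 = 2*(a:ℝ)*(k:ℝ)/(n:ℝ) := by simp [he]
    have heTop : e (2*k-1) ≤ 2*((a:ℝ)+1)*(k:ℝ)/(n:ℝ) := by
      simp only [he]
      gcongr
      rw [h2k1]; nlinarith
    have hlen : ∀ l : ℕ, e (l+1) - e l = 1/(n:ℝ) := by
      intro l; simp only [he]
      rw [div_sub_div_same]
      push_cast; ring_nf
    set c : ℕ → ℝ := fun l => (1 - |(l:ℝ) - ((k:ℝ)-1)|/(k:ℝ))^2 with hc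
    have hc0 : ∀ l : ℕ, 0 ≤ c l := by intro l; simp only [hc]; positivity
    have hc1 : ∀ l : ℕ, l < 2*k-1 → c l ≤ 1 := by
      intro l hl
      simp only [hc]
      have hlr : (l:ℝ) ≤ 2*(k:ℝ)-2 := by
        have h' : (l:ℝ) + 1 ≤ ((2*k-1:ℕ):ℝ) := by exact_mod_cast hl
        rw [h2k1] at h'; linarith
      have habs : |(l:ℝ) - ((k:ℝ)-1)| ≤ (k:ℝ) := by
        rw [abs_le]
        constructor <;> [linarith [Nat.cast_nonneg (α := ℝ) l]; linarith]
      have habs0 : 0 ≤ |(l:ℝ) - ((k:ℝ)-1)| := abs_nonneg _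
      have hx : |(l:ℝ) - ((k:ℝ)-1)|/(k:ℝ) ≤ 1 := by
        rw [div_le_one hK]; exact habs
      have hx0 : 0 ≤ |(l:ℝ) - ((k:ℝ)-1)|/(k:ℝ) := by positivity
      nlinarith
    have hcsum : ∑ l ∈ Finset.range (2*k-1), c l = (2*(k:ℝ)^2+1)/(3*(k:ℝ)) := by
      simp only [hc]; exact kernel_sum k hk
    have hW : blockWeight φ n k (1+a)
        = ∑ l ∈ Finset.range (2*k-1), c l * ∫ t in e l..e (l+1), (φ t)^2 := by
      rw [blockWeight_eq φ n k (1+a) hk]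
      refine Finset.sum_congr rfl fun l _ => ?_
      have E1 : ((2*(((1+a:ℕ)):ℝ)-2)*(k:ℝ) + (l:ℝ))/(n:ℝ) = e l := by
        simp only [he]; push_cast; ring
      have E2 : ((2*(((1+a:ℕ)):ℝ)-2)*(k:ℝ) + ((l:ℝ)+1))/(n:ℝ) = e (l+1) := by
        simp only [he]; push_cast; ring
      rw [E1, E2]
    have hfrac : (m:ℝ) * (2*(k:ℝ)/(n:ℝ)) ≤ 1 := by
      rw [← le_div_iff₀ (by positivity)]
      calc (m:ℝ) ≤ (n:ℝ)/(2*(k:ℝ)) := hMle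
        _ = 1 / (2*(k:ℝ)/(n:ℝ)) := by field_simp
    set B : ℝ := ∑ l ∈ Finset.range (2*k-1),
        c l * ((m:ℝ) * ∫ t in e l..e (l+1), |(γs t)^2 - h t|) with hB
    have hB0 : 0 ≤ B := by
      rw [hB]
      refine Finset.sum_nonneg fun l _ => ?_
      have : 0 ≤ ∫ t in e l..e (l+1), |(γs t)^2 - h t| :=
        intervalIntegral.integral_nonneg (he_mono l) (fun u _ => abs_nonneg _)
      exact mul_nonneg (hc0 l) (mul_nonneg hM.le this)
    have hwidth0 : 2*((a:ℝ)+1)*(k:ℝ)/(n:ℝ) - 2*(a:ℝ)*(k:ℝ)/(n:ℝ) = 2*(k:ℝ)/(n:ℝ) := by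
      rw [div_sub_div_same]; ring_nf
    have he_ge : ∀ l : ℕ, 2*(a:ℝ)*(k:ℝ)/(n:ℝ) ≤ e l := by
      intro l; simp only [he]
      gcongr
      linarith [Nat.cast_nonneg (α := ℝ) l]
    have he_le_top : ∀ l : ℕ, l ≤ 2*k-1 → e l ≤ 2*((a:ℝ)+1)*(k:ℝ)/(n:ℝ) := by
      intro l hl
      refine le_trans ?_ heTop
      simp only [he]
      gcongr
    have hptwise : ∀ s ∈ Set.Icc (2*(a:ℝ)*(k:ℝ)/(n:ℝ)) (2*((a:ℝ)+1)*(k:ℝ)/(n:ℝ)),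
        |(m:ℝ) * blockWeight φ n k (1+a) - (γs s)^2/3|
          ≤ (ε1 + ε2 + (2*(k:ℝ)/(3*(n:ℝ)) + 1/(6*(k:ℝ)^2))*C^2) + B + |(γs s)^2 - h s| := by
      intro s hs
      obtain ⟨hs1, hs2⟩ := hs
      have hs01 : s ∈ Set.Icc (0:ℝ) 1 := ⟨le_trans hpa0 hs1, le_trans hs2 hpb1⟩
      have hgs : |(γs s)^2| ≤ C^2 := by
        rw [abs_pow]
        exact pow_le_pow_left₀ (abs_nonneg _) (hγb s hs01) 2
      have hq0 : 0 ≤ |(γs s)^2 - h s| := abs_nonneg _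
      -- per-l inner bound
      have inner : ∀ l ∈ Finset.range (2*k-1),
          |(∫ t in e l..e (l+1), (φ t)^2) - (γs s)^2/(n:ℝ)|
            ≤ ε1/(n:ℝ) + (∫ t in e l..e (l+1), |(γs t)^2 - h t|) + ε2/(n:ℝ)
              + |(γs s)^2 - h s|/(n:ℝ) := by
        intro l hl
        have hl' := Finset.mem_range.1 hl
        have h0 : 0 ≤ e l := he_nonneg l
        have hmono := he_mono l
        have h1' : e (l+1) ≤ 1 := he_le1 (l+1) (by omega)
        have hIφ2 := IIφ h0 hmono h1'
        have hIg2 := IIg h0 hmono h1'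
        have hIh2 : IntervalIntegrable h MeasureTheory.volume (e l) (e (l+1)) :=
          hh.intervalIntegrable _ _
        have hioc : Set.uIoc (e l) (e (l+1)) ⊆ Set.Icc (0:ℝ) 1 := by
          rw [Set.uIoc_of_le hmono]
          intro x hx
          exact ⟨le_trans h0 hx.1.le, le_trans hx.2 h1'⟩
        have habs_len : |e (l+1) - e l| = 1/(n:ℝ) := by
          rw [hlen l]; exact abs_of_nonneg (by positivity)
        have d1 : |(∫ t in e l..e (l+1), (φ t)^2) - (∫ t in e l..e (l+1), (γs t)^2)|
            ≤ ε1/(n:ℝ) := by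
          rw [← intervalIntegral.integral_sub hIφ2 hIg2]
          have hbd : ∀ x ∈ Set.uIoc (e l) (e (l+1)), ‖(φ x)^2 - (γs x)^2‖ ≤ ε1 := by
            intro x hx
            rw [Real.norm_eq_abs]
            exact hfg x (hioc hx)
          have := intervalIntegral.norm_integral_le_of_norm_le_const hbd
          rw [Real.norm_eq_abs, habs_len] at this
          calc |∫ t in e l..e (l+1), ((φ t)^2 - (γs t)^2)| ≤ ε1 * (1/(n:ℝ)) := this
            _ = ε1/(n:ℝ) := by ring
        have d2 : |(∫ t in e l..e (l+1), (γs t)^2) - (∫ t in e l..e (l+1), h t)|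
            ≤ ∫ t in e l..e (l+1), |(γs t)^2 - h t| := by
          rw [← intervalIntegral.integral_sub hIg2 hIh2]
          exact intervalIntegral.abs_integral_le_integral_abs hmono
        have d3 : |(∫ t in e l..e (l+1), h t) - h s * (1/(n:ℝ))| ≤ ε2/(n:ℝ) := by
          have hconst : IntervalIntegrable (fun _ : ℝ => h s) MeasureTheory.volume
              (e l) (e (l+1)) := _root_.intervalIntegrable_const
          have hsubint : (∫ t in e l..e (l+1), (h t - h s))
              = (∫ t in e l..e (l+1), h t) - h s * (1/(n:ℝ)) := by
            rw [intervalIntegral.integral_sub hIh2 hconst, intervalIntegral.integral_const,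
              smul_eq_mul, hlen l]
            ring
          rw [← hsubint]
          have hbd : ∀ x ∈ Set.uIoc (e l) (e (l+1)), ‖h x - h s‖ ≤ ε2 := by
            intro x hx
            rw [Set.uIoc_of_le hmono] at hx
            have hx1 : 2*(a:ℝ)*(k:ℝ)/(n:ℝ) ≤ x := le_trans (he_ge l) hx.1.le
            have hx2 : x ≤ 2*((a:ℝ)+1)*(k:ℝ)/(n:ℝ) :=
              le_trans hx.2 (he_le_top (l+1) (by omega))
            rw [Real.norm_eq_abs]
            refine hδ x s (abs_le.2 ⟨by linarith, by linarith⟩)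
          have := intervalIntegral.norm_integral_le_of_norm_le_const hbd
          rw [Real.norm_eq_abs, habs_len] at this
          calc |∫ t in e l..e (l+1), (h t - h s)| ≤ ε2 * (1/(n:ℝ)) := this
            _ = ε2/(n:ℝ) := by ring
        have d4 : |(h s - (γs s)^2)/(n:ℝ)| = |(γs s)^2 - h s|/(n:ℝ) := by
          rw [abs_div, abs_of_nonneg hN.le, abs_sub_comm]
        have decomp : (∫ t in e l..e (l+1), (φ t)^2) - (γs s)^2/(n:ℝ)
            = ((∫ t in e l..e (l+1), (φ t)^2) - (∫ t in e l..e (l+1), (γs t)^2))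
              + ((∫ t in e l..e (l+1), (γs t)^2) - (∫ t in e l..e (l+1), h t))
              + ((∫ t in e l..e (l+1), h t) - h s * (1/(n:ℝ)))
              + (h s - (γs s)^2)/(n:ℝ) := by ring
        rw [decomp]
        have t1 := abs_add_le (((∫ t in e l..e (l+1), (φ t)^2)
            - (∫ t in e l..e (l+1), (γs t)^2))
              + ((∫ t in e l..e (l+1), (γs t)^2) - (∫ t in e l..e (l+1), h t))
              + ((∫ t in e l..e (l+1), h t) - h s * (1/(n:ℝ))))
            ((h s - (γs s)^2)/(n:ℝ))
        have t2 := abs_add_le (((∫ t in e l..e (l+1), (φ t)^2)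
            - (∫ t in e l..e (l+1), (γs t)^2))
              + ((∫ t in e l..e (l+1), (γs t)^2) - (∫ t in e l..e (l+1), h t)))
            ((∫ t in e l..e (l+1), h t) - h s * (1/(n:ℝ)))
        have t3 := abs_add_le ((∫ t in e l..e (l+1), (φ t)^2)
            - (∫ t in e l..e (l+1), (γs t)^2))
            ((∫ t in e l..e (l+1), (γs t)^2) - (∫ t in e l..e (l+1), h t))
        rw [d4] at t1
        linarith
      -- expansion
      have expand : (m:ℝ) * blockWeight φ n k (1+a) - (γs s)^2/3
          = (∑ l ∈ Finset.range (2*k-1),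
              c l * ((m:ℝ) * ((∫ t in e l..e (l+1), (φ t)^2) - (γs s)^2/(n:ℝ))))
            + ((m:ℝ)*(2*(k:ℝ)^2+1)/(3*(k:ℝ)*(n:ℝ)) - 1/3) * (γs s)^2 := by
        rw [hW, Finset.mul_sum]
        have key : ∀ l ∈ Finset.range (2*k-1),
            c l * ((m:ℝ) * ((∫ t in e l..e (l+1), (φ t)^2) - (γs s)^2/(n:ℝ)))
              = (m:ℝ)*(c l * ∫ t in e l..e (l+1), (φ t)^2)
                - c l * ((m:ℝ)*(γs s)^2/(n:ℝ)) := by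
          intro l _; ring
        rw [Finset.sum_congr rfl key, Finset.sum_sub_distrib, ← Finset.sum_mul, hcsum]
        field_simp
        ring
      rw [expand]
      have habs1 : |∑ l ∈ Finset.range (2*k-1),
          c l * ((m:ℝ) * ((∫ t in e l..e (l+1), (φ t)^2) - (γs s)^2/(n:ℝ)))|
          ≤ ∑ l ∈ Finset.range (2*k-1),
            c l * ((m:ℝ) * |(∫ t in e l..e (l+1), (φ t)^2) - (γs s)^2/(n:ℝ)|) := by
        refine le_trans (Finset.abs_sum_le_sum_abs _ _) (Finset.sum_le_sum fun l hl => ?_)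
        rw [abs_mul, abs_mul]
        rw [abs_of_nonneg (hc0 l), abs_of_nonneg hM.le]
      have hsum_le : ∑ l ∈ Finset.range (2*k-1),
            c l * ((m:ℝ) * |(∫ t in e l..e (l+1), (φ t)^2) - (γs s)^2/(n:ℝ)|)
          ≤ B + (ε1 + ε2 + |(γs s)^2 - h s|) := by
        have step1 : ∀ l ∈ Finset.range (2*k-1),
            c l * ((m:ℝ) * |(∫ t in e l..e (l+1), (φ t)^2) - (γs s)^2/(n:ℝ)|)
              ≤ c l * ((m:ℝ) * ∫ t in e l..e (l+1), |(γs t)^2 - h t|)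
                + c l * ((m:ℝ)*(ε1 + ε2 + |(γs s)^2 - h s|)/(n:ℝ)) := by
          intro l hl
          have hi := inner l hl
          calc c l * ((m:ℝ) * |(∫ t in e l..e (l+1), (φ t)^2) - (γs s)^2/(n:ℝ)|)
              ≤ c l * ((m:ℝ) * (ε1/(n:ℝ) + (∫ t in e l..e (l+1), |(γs t)^2 - h t|)
                  + ε2/(n:ℝ) + |(γs s)^2 - h s|/(n:ℝ))) :=
                mul_le_mul_of_nonneg_left (mul_le_mul_of_nonneg_left hi hM.le) (hc0 l)
            _ = c l * ((m:ℝ) * ∫ t in e l..e (l+1), |(γs t)^2 - h t|)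
                + c l * ((m:ℝ)*(ε1 + ε2 + |(γs s)^2 - h s|)/(n:ℝ)) := by ring
        refine le_trans (Finset.sum_le_sum step1) ?_
        rw [Finset.sum_add_distrib, ← Finset.sum_mul, hcsum, ← hB]
        have hfinal : (2*(k:ℝ)^2+1)/(3*(k:ℝ))
              * ((m:ℝ)*(ε1 + ε2 + |(γs s)^2 - h s|)/(n:ℝ))
            = ((m:ℝ)*(2*(k:ℝ)^2+1)/(3*(k:ℝ)*(n:ℝ))) * (ε1 + ε2 + |(γs s)^2 - h s|) := by
          field_simp
        rw [hfinal]
        have : ((m:ℝ)*(2*(k:ℝ)^2+1)/(3*(k:ℝ)*(n:ℝ))) * (ε1 + ε2 + |(γs s)^2 - h s|)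
            ≤ 1 * (ε1 + ε2 + |(γs s)^2 - h s|) :=
          mul_le_mul_of_nonneg_right hρ1 (by positivity)
        rw [one_mul] at this
        linarith
      have herrterm : |((m:ℝ)*(2*(k:ℝ)^2+1)/(3*(k:ℝ)*(n:ℝ)) - 1/3) * (γs s)^2|
          ≤ (2*(k:ℝ)/(3*(n:ℝ)) + 1/(6*(k:ℝ)^2))*C^2 := by
        rw [abs_mul]
        exact mul_le_mul hρerr hgs (abs_nonneg _) herr0
      calc |(∑ l ∈ Finset.range (2*k-1),
            c l * ((m:ℝ) * ((∫ t in e l..e (l+1), (φ t)^2) - (γs s)^2/(n:ℝ))))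
            + ((m:ℝ)*(2*(k:ℝ)^2+1)/(3*(k:ℝ)*(n:ℝ)) - 1/3) * (γs s)^2|
          ≤ |∑ l ∈ Finset.range (2*k-1),
              c l * ((m:ℝ) * ((∫ t in e l..e (l+1), (φ t)^2) - (γs s)^2/(n:ℝ)))|
            + |((m:ℝ)*(2*(k:ℝ)^2+1)/(3*(k:ℝ)*(n:ℝ)) - 1/3) * (γs s)^2| := abs_add_le _ _
        _ ≤ (ε1 + ε2 + (2*(k:ℝ)/(3*(n:ℝ)) + 1/(6*(k:ℝ)^2))*C^2) + B + |(γs s)^2 - h s| := by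
            linarith
    have hIl : IntervalIntegrable (fun s => |(m:ℝ)*blockWeight φ n k (1+a) - (γs s)^2/3|)
        MeasureTheory.volume (2*(a:ℝ)*(k:ℝ)/(n:ℝ)) (2*((a:ℝ)+1)*(k:ℝ)/(n:ℝ)) := by
      have := (_root_.intervalIntegrable_const (μ := MeasureTheory.volume)
          (a := 2*(a:ℝ)*(k:ℝ)/(n:ℝ)) (b := 2*((a:ℝ)+1)*(k:ℝ)/(n:ℝ))
          (c := (m:ℝ)*blockWeight φ n k (1+a))).sub
        (((IIg hpa0 hpab hpb1)).div_const 3)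
      exact this.abs
    have hIgh := IIgh hpa0 hpab hpb1
    have hIr : IntervalIntegrable (fun s => (ε1 + ε2 + (2*(k:ℝ)/(3*(n:ℝ))
          + 1/(6*(k:ℝ)^2))*C^2) + B + |(γs s)^2 - h s|)
        MeasureTheory.volume (2*(a:ℝ)*(k:ℝ)/(n:ℝ)) (2*((a:ℝ)+1)*(k:ℝ)/(n:ℝ)) := by
      have h1 : IntervalIntegrable (fun _ : ℝ => (ε1 + ε2 + (2*(k:ℝ)/(3*(n:ℝ))
          + 1/(6*(k:ℝ)^2))*C^2) + B) MeasureTheory.volume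
          (2*(a:ℝ)*(k:ℝ)/(n:ℝ)) (2*((a:ℝ)+1)*(k:ℝ)/(n:ℝ)) := intervalIntegrable_const
      exact h1.add hIgh
    have hwidth : 2*((a:ℝ)+1)*(k:ℝ)/(n:ℝ) - 2*(a:ℝ)*(k:ℝ)/(n:ℝ) = 2*(k:ℝ)/(n:ℝ) := by
      rw [div_sub_div_same]; ring_nf
    have hstep : B * (2*(k:ℝ)/(n:ℝ))
        ≤ ∫ s in (2*(a:ℝ)*(k:ℝ)/(n:ℝ))..(2*((a:ℝ)+1)*(k:ℝ)/(n:ℝ)), |(γs s)^2 - h s| := by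
      have hint2 : ∀ l : ℕ, l < 2*k-1 → IntervalIntegrable (fun t => |(γs t)^2 - h t|)
          MeasureTheory.volume (e l) (e (l+1)) := by
        intro l hl
        exact IIgh (he_nonneg l) (he_mono l) (he_le1 (l+1) (by omega))
      have h2 : ∑ l ∈ Finset.range (2*k-1), ∫ t in e l..e (l+1), |(γs t)^2 - h t|
          = ∫ t in (e 0)..(e (2*k-1)), |(γs t)^2 - h t| :=
        intervalIntegral.sum_integral_adjacent_intervals hint2
      have h1 : B * (2*(k:ℝ)/(n:ℝ))
          ≤ ∑ l ∈ Finset.range (2*k-1), ∫ t in e l..e (l+1), |(γs t)^2 - h t| := by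
        rw [hB, Finset.sum_mul]
        refine Finset.sum_le_sum fun l hl => ?_
        have hIpos : 0 ≤ ∫ t in e l..e (l+1), |(γs t)^2 - h t| :=
          intervalIntegral.integral_nonneg (he_mono l) (fun u _ => abs_nonneg _)
        have hre : c l * ((m:ℝ) * ∫ t in e l..e (l+1), |(γs t)^2 - h t|) * (2*(k:ℝ)/(n:ℝ))
            = (c l * ((m:ℝ) * (2*(k:ℝ)/(n:ℝ)))) * ∫ t in e l..e (l+1), |(γs t)^2 - h t| := by
          ring
        rw [hre]
        have hcoef : c l * ((m:ℝ) * (2*(k:ℝ)/(n:ℝ))) ≤ 1 := by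
          have := hc1 l (Finset.mem_range.1 hl)
          have h0 : 0 ≤ (m:ℝ) * (2*(k:ℝ)/(n:ℝ)) := by positivity
          nlinarith [hc0 l]
        calc (c l * ((m:ℝ) * (2*(k:ℝ)/(n:ℝ)))) * ∫ t in e l..e (l+1), |(γs t)^2 - h t|
            ≤ 1 * ∫ t in e l..e (l+1), |(γs t)^2 - h t| := by
              apply mul_le_mul_of_nonneg_right hcoef hIpos
          _ = _ := one_mul _
      have h3 : (∫ t in (e 0)..(e (2*k-1)), |(γs t)^2 - h t|)
          ≤ ∫ s in (2*(a:ℝ)*(k:ℝ)/(n:ℝ))..(2*((a:ℝ)+1)*(k:ℝ)/(n:ℝ)), |(γs s)^2 - h s| := by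
        have hIa : IntervalIntegrable (fun t => |(γs t)^2 - h t|) MeasureTheory.volume
            (e 0) (e (2*k-1)) := by
          refine IIgh (he_nonneg 0) ?_ (he_le1 (2*k-1) le_rfl)
          simp only [he]; gcongr; push_cast; positivity
        have hIb : IntervalIntegrable (fun t => |(γs t)^2 - h t|) MeasureTheory.volume
            (e (2*k-1)) (2*((a:ℝ)+1)*(k:ℝ)/(n:ℝ)) := by
          refine IIgh (he_nonneg _) heTop hpb1
        have hadd := intervalIntegral.integral_add_adjacent_intervals hIa hIb
        have hpos2 : 0 ≤ ∫ t in e (2*k-1)..(2*((a:ℝ)+1)*(k:ℝ)/(n:ℝ)), |(γs t)^2 - h t| :=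
          intervalIntegral.integral_nonneg heTop (fun u _ => abs_nonneg _)
        rw [he0] at hadd
        rw [he0]
        linarith
      linarith
    calc (∫ s in (2*(a:ℝ)*(k:ℝ)/(n:ℝ))..(2*((a:ℝ)+1)*(k:ℝ)/(n:ℝ)),
            |(m:ℝ) * blockWeight φ n k (1+a) - (γs s)^2/3|)
        ≤ ∫ s in (2*(a:ℝ)*(k:ℝ)/(n:ℝ))..(2*((a:ℝ)+1)*(k:ℝ)/(n:ℝ)),
            ((ε1 + ε2 + (2*(k:ℝ)/(3*(n:ℝ)) + 1/(6*(k:ℝ)^2))*C^2) + B + |(γs s)^2 - h s|) :=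
          intervalIntegral.integral_mono_on hpab hIl hIr hptwise
      _ = ((ε1 + ε2 + (2*(k:ℝ)/(3*(n:ℝ)) + 1/(6*(k:ℝ)^2))*C^2) + B) * (2*(k:ℝ)/(n:ℝ))
            + ∫ s in (2*(a:ℝ)*(k:ℝ)/(n:ℝ))..(2*((a:ℝ)+1)*(k:ℝ)/(n:ℝ)), |(γs s)^2 - h s| := by
          rw [intervalIntegral.integral_add intervalIntegrable_const hIgh,
            intervalIntegral.integral_const, smul_eq_mul, hwidth, mul_comm]
      _ ≤ 2*(k:ℝ)/(n:ℝ) * (ε1 + ε2 + (2*(k:ℝ)/(3*(n:ℝ)) + 1/(6*(k:ℝ)^2))*C^2)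
            + 2*(∫ s in (2*(a:ℝ)*(k:ℝ)/(n:ℝ))..(2*((a:ℝ)+1)*(k:ℝ)/(n:ℝ)),
              |(γs s)^2 - h s|) := by
          have expand : ((ε1 + ε2 + (2*(k:ℝ)/(3*(n:ℝ)) + 1/(6*(k:ℝ)^2))*C^2) + B)
              * (2*(k:ℝ)/(n:ℝ))
              = 2*(k:ℝ)/(n:ℝ) * (ε1 + ε2 + (2*(k:ℝ)/(3*(n:ℝ)) + 1/(6*(k:ℝ)^2))*C^2)
                + B * (2*(k:ℝ)/(n:ℝ)) := by ring
          rw [expand]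
          linarith
  -- reindex the sum
  have hreindex : ∑ i ∈ Finset.Icc 1 m, (∫ s in (((2 * (i : ℝ) - 2) * (k : ℝ)) / (n : ℝ))..
        ((2 * (i : ℝ) * (k : ℝ)) / (n : ℝ)),
        |(m:ℝ) * blockWeight φ n k i - (γs s) ^ 2 / 3|)
      = ∑ a ∈ Finset.range m, (∫ s in (2*(a:ℝ)*(k:ℝ)/(n:ℝ))..(2*((a:ℝ)+1)*(k:ℝ)/(n:ℝ)),
          |(m:ℝ) * blockWeight φ n k (1+a) - (γs s)^2/3|) := by
    rw [← Finset.Ico_add_one_right_eq_Icc, Finset.sum_Ico_eq_sum_range]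
    refine Finset.sum_congr rfl fun a _ => ?_
    have E1 : ((2 * ((1+a:ℕ) : ℝ) - 2) * (k : ℝ)) / (n : ℝ) = 2*(a:ℝ)*(k:ℝ)/(n:ℝ) := by
      push_cast; ring
    have E2 : (2 * ((1+a:ℕ) : ℝ) * (k : ℝ)) / (n : ℝ) = 2*((a:ℝ)+1)*(k:ℝ)/(n:ℝ) := by
      push_cast; ring
    rw [E1, E2]
  rw [hreindex]
  have hsum2 : ∑ a ∈ Finset.range m, (∫ s in (2*(a:ℝ)*(k:ℝ)/(n:ℝ))..(2*((a:ℝ)+1)*(k:ℝ)/(n:ℝ)),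
          |(γs s)^2 - h s|)
      = ∫ s in (0:ℝ)..(2*(m:ℝ)*(k:ℝ)/(n:ℝ)), |(γs s)^2 - h s| := by
    have hint : ∀ a : ℕ, a < m → IntervalIntegrable (fun s => |(γs s)^2 - h s|)
        MeasureTheory.volume (2*((a:ℕ):ℝ)*(k:ℝ)/(n:ℝ)) (2*(((a+1:ℕ)):ℝ)*(k:ℝ)/(n:ℝ)) := by
      intro a ha
      have hle : 2*((a:ℕ):ℝ)*(k:ℝ)/(n:ℝ) ≤ 2*(((a+1:ℕ)):ℝ)*(k:ℝ)/(n:ℝ) := by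
        have E : 2*(((a+1:ℕ)):ℝ)*(k:ℝ)/(n:ℝ) = 2*((a:ℝ)+1)*(k:ℝ)/(n:ℝ) := by push_cast; ring
        rw [E]; exact hp_mono a
      exact IIgh (hp_nonneg a) hle (hp_le1 (a+1) ha)
    have key := intervalIntegral.sum_integral_adjacent_intervals
      (μ := MeasureTheory.volume) (a := fun a : ℕ => 2*(a:ℝ)*(k:ℝ)/(n:ℝ)) (n := m)
      (f := fun s => |(γs s)^2 - h s|) hint
    beta_reduce at key
    have e0 : 2*((0:ℕ):ℝ)*(k:ℝ)/(n:ℝ) = (0:ℝ) := by norm_num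
    rw [e0] at key
    rw [← key]
    refine Finset.sum_congr rfl fun a _ => ?_
    have E : 2*(((a+1:ℕ)):ℝ)*(k:ℝ)/(n:ℝ) = 2*((a:ℝ)+1)*(k:ℝ)/(n:ℝ) := by push_cast; ring
    rw [E]
  calc ∑ a ∈ Finset.range m, (∫ s in (2*(a:ℝ)*(k:ℝ)/(n:ℝ))..(2*((a:ℝ)+1)*(k:ℝ)/(n:ℝ)),
          |(m:ℝ) * blockWeight φ n k (1+a) - (γs s)^2/3|)
      ≤ ∑ a ∈ Finset.range m, (2*(k:ℝ)/(n:ℝ) * (ε1 + ε2 + (2*(k:ℝ)/(3*(n:ℝ))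
            + 1/(6*(k:ℝ)^2))*C^2)
          + 2*(∫ s in (2*(a:ℝ)*(k:ℝ)/(n:ℝ))..(2*((a:ℝ)+1)*(k:ℝ)/(n:ℝ)),
              |(γs s)^2 - h s|)) := by
        refine Finset.sum_le_sum fun a ha => block a (Finset.mem_range.1 ha)
    _ = (m:ℝ) * (2*(k:ℝ)/(n:ℝ) * (ε1 + ε2 + (2*(k:ℝ)/(3*(n:ℝ)) + 1/(6*(k:ℝ)^2))*C^2))
          + 2*(∫ s in (0:ℝ)..(2*(m:ℝ)*(k:ℝ)/(n:ℝ)), |(γs s)^2 - h s|) := by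
        rw [Finset.sum_add_distrib, Finset.sum_const, Finset.card_range, ← Finset.mul_sum,
          hsum2, nsmul_eq_mul]
    _ ≤ ε1 + ε2 + (2*(k:ℝ)/(3*(n:ℝ)) + 1/(6*(k:ℝ)^2))*C^2 + 2*ε3 := by
        have h1 : (m:ℝ) * (2*(k:ℝ)/(n:ℝ) * (ε1 + ε2 + (2*(k:ℝ)/(3*(n:ℝ))
            + 1/(6*(k:ℝ)^2))*C^2)) ≤ ε1 + ε2 + (2*(k:ℝ)/(3*(n:ℝ)) + 1/(6*(k:ℝ)^2))*C^2 := by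
          have hfrac : (m:ℝ) * (2*(k:ℝ)/(n:ℝ)) ≤ 1 := by
            rw [← le_div_iff₀ (by positivity)]
            calc (m:ℝ) ≤ (n:ℝ)/(2*(k:ℝ)) := hMle
              _ = 1 / (2*(k:ℝ)/(n:ℝ)) := by field_simp
          calc (m:ℝ) * (2*(k:ℝ)/(n:ℝ) * (ε1 + ε2 + (2*(k:ℝ)/(3*(n:ℝ))
                + 1/(6*(k:ℝ)^2))*C^2))
              = ((m:ℝ) * (2*(k:ℝ)/(n:ℝ))) * (ε1 + ε2 + (2*(k:ℝ)/(3*(n:ℝ))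
                + 1/(6*(k:ℝ)^2))*C^2) := by ring
            _ ≤ 1 * (ε1 + ε2 + (2*(k:ℝ)/(3*(n:ℝ)) + 1/(6*(k:ℝ)^2))*C^2) :=
                mul_le_mul_of_nonneg_right hfrac hA0
            _ = ε1 + ε2 + (2*(k:ℝ)/(3*(n:ℝ)) + 1/(6*(k:ℝ)^2))*C^2 := one_mul _
        have h2 : (∫ s in (0:ℝ)..(2*(m:ℝ)*(k:ℝ)/(n:ℝ)), |(γs s)^2 - h s|) ≤ ε3 := by
          have hpm : 2*(m:ℝ)*(k:ℝ)/(n:ℝ) ≤ 1 := by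
            have := hp_le1 m le_rfl
            exact this
          exact hgh 0 _ le_rfl (hp_nonneg m) hpm
        linarith

end Aux

section MainTheorem
open MeasureTheory

set_option maxHeartbeats 4000000 in
/-- If `γ⁽ⁿ⁾ → γ*` uniformly on `[0,1]`, with `γ*` bounded and piecewise
continuous with finitely many jumps, then with `k = ⌊θ√n⌋`, `m = ⌊n/(2k)⌋` and `w_i` the
triangular-kernel block weights of `(γ⁽ⁿ⁾)²`,
`Σ_{i=1}^m ∫_{(2i-2)k/n}^{2ik/n} |m w_i - (γ*_s)²/3| ds → 0`. -/
theorem blockWeight_L1_convergence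
    (γstar : ℝ → ℝ) (γn : ℕ → ℝ → ℝ) (θ C : ℝ) (hθ : 0 < θ) (hC : 0 ≤ C)
    (hmeas_star : Measurable γstar) (hmeas : ∀ n, Measurable (γn n))
    (hbdd_star : ∀ t ∈ Set.Icc (0 : ℝ) 1, |γstar t| ≤ C)
    (hbdd : ∀ n, ∀ t ∈ Set.Icc (0 : ℝ) 1, |γn n t| ≤ C)
    (hpiecewise : ∃ J : Finset ℝ, ∀ t ∈ Set.Icc (0 : ℝ) 1, t ∉ J →
      ContinuousWithinAt γstar (Set.Icc (0 : ℝ) 1) t)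
    (hunif : TendstoUniformlyOn (fun n t => γn n t) γstar atTop (Set.Icc (0 : ℝ) 1)) :
    Tendsto (fun n : ℕ =>
        ∑ i ∈ Finset.Icc 1 (n / (2 * ⌊θ * Real.sqrt n⌋₊)),
          ∫ s in (((2 * (i : ℝ) - 2) * (⌊θ * Real.sqrt n⌋₊ : ℝ)) / (n : ℝ))..
              ((2 * (i : ℝ) * (⌊θ * Real.sqrt n⌋₊ : ℝ)) / (n : ℝ)),
            |((n / (2 * ⌊θ * Real.sqrt n⌋₊) : ℕ) : ℝ) *
                blockWeight (γn n) n ⌊θ * Real.sqrt n⌋₊ i - (γstar s) ^ 2 / 3|)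
      atTop (nhds 0) := by
  rw [Metric.tendsto_nhds]
  intro ε hε
  -- approximate the (indicator of the) squared limit function by a continuous function
  have hgm : Measurable (fun t => (γstar t)^2) := hmeas_star.pow_const 2
  have hIOn : MeasureTheory.IntegrableOn (fun t => (γstar t)^2) (Set.Icc (0:ℝ) 1)
      MeasureTheory.volume := by
    refine MeasureTheory.Measure.integrableOn_of_bounded (M := C^2) measure_Icc_lt_top.ne
      hgm.aestronglyMeasurable ?_
    refine (MeasureTheory.ae_restrict_iff' measurableSet_Icc).2 (Filter.Eventually.of_forall ?_)
    intro t ht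
    rw [Real.norm_eq_abs, abs_pow]
    exact pow_le_pow_left₀ (abs_nonneg _) (hbdd_star t ht) 2
  have hind_int : MeasureTheory.Integrable
      ((Set.Icc (0:ℝ) 1).indicator (fun t => (γstar t)^2)) MeasureTheory.volume :=
    hIOn.integrable_indicator measurableSet_Icc
  obtain ⟨h, hhsupp, hhint, hhcont, hhintg⟩ :=
    hind_int.exists_hasCompactSupport_integral_sub_le (ε := ε/8) (by positivity)
  have huc : UniformContinuous h := hhsupp.uniformContinuous_of_continuous hhcont
  obtain ⟨δ, hδpos, hδuc⟩ := Metric.uniformContinuous_iff.1 huc (ε/8) (by positivity)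
  -- the L¹ bound for the approximation on subintervals of [0,1]
  have hghprop : ∀ u v : ℝ, 0 ≤ u → u ≤ v → v ≤ 1 →
      (∫ t in u..v, |(γstar t)^2 - h t|) ≤ ε/8 := by
    intro u v h0 huv h1
    rw [intervalIntegral.integral_of_le huv]
    have hIocsub : Set.Ioc u v ⊆ Set.Icc (0:ℝ) 1 := fun x hx =>
      ⟨le_trans h0 hx.1.le, le_trans hx.2 h1⟩
    have heq : ∀ x ∈ Set.Ioc u v, |(γstar x)^2 - h x|
        = ‖(Set.Icc (0:ℝ) 1).indicator (fun t => (γstar t)^2) x - h x‖ := by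
      intro x hx
      rw [Set.indicator_of_mem (hIocsub hx), Real.norm_eq_abs]
    calc (∫ t in Set.Ioc u v, |(γstar t)^2 - h t|)
        = ∫ t in Set.Ioc u v,
            ‖(Set.Icc (0:ℝ) 1).indicator (fun t => (γstar t)^2) t - h t‖ :=
          MeasureTheory.setIntegral_congr_fun measurableSet_Ioc heq
      _ ≤ ∫ t, ‖(Set.Icc (0:ℝ) 1).indicator (fun t => (γstar t)^2) t - h t‖ :=
          MeasureTheory.setIntegral_le_integral (hind_int.sub hhintg).norm
            (Filter.Eventually.of_forall fun t => norm_nonneg _)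
      _ ≤ ε/8 := hhint
  -- eventual facts
  have hsqrtT : Tendsto (fun n : ℕ => Real.sqrt n) atTop atTop := by
    refine tendsto_atTop_atTop.2 fun b => ⟨⌈(max b 0)^2⌉₊, fun n hn => ?_⟩
    have h1 : ((max b 0)^2 : ℝ) ≤ n := le_trans (Nat.le_ceil _) (by exact_mod_cast hn)
    calc b ≤ max b 0 := le_max_left _ _
      _ = Real.sqrt ((max b 0)^2) := (Real.sqrt_sq (le_max_right _ _)).symm
      _ ≤ Real.sqrt n := Real.sqrt_le_sqrt h1
  have hθsq : Tendsto (fun n : ℕ => θ * Real.sqrt n) atTop atTop :=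
    Tendsto.const_mul_atTop hθ hsqrtT
  have hkt : Tendsto (fun n : ℕ => ⌊θ * Real.sqrt n⌋₊) atTop atTop :=
    tendsto_nat_floor_atTop.comp hθsq
  have hktR : Tendsto (fun n : ℕ => ((⌊θ * Real.sqrt n⌋₊ : ℕ) : ℝ)) atTop atTop :=
    tendsto_natCast_atTop_atTop.comp hkt
  have hksq : Tendsto (fun n : ℕ => 6*((⌊θ * Real.sqrt n⌋₊ : ℕ) : ℝ)^2) atTop atTop := by
    have h2 : Tendsto (fun n : ℕ => ((⌊θ * Real.sqrt n⌋₊ : ℕ) : ℝ)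
        * ((⌊θ * Real.sqrt n⌋₊ : ℕ) : ℝ)) atTop atTop := hktR.atTop_mul_atTop₀ hktR
    have h3 : Tendsto (fun n : ℕ => 6*(((⌊θ * Real.sqrt n⌋₊ : ℕ) : ℝ)
        * ((⌊θ * Real.sqrt n⌋₊ : ℕ) : ℝ))) atTop atTop :=
      Tendsto.const_mul_atTop (by norm_num) h2
    refine h3.congr fun n => by ring
  have hinv : Tendsto (fun n : ℕ => C^2/(6*((⌊θ * Real.sqrt n⌋₊ : ℕ) : ℝ)^2))
      atTop (nhds 0) := Tendsto.div_atTop tendsto_const_nhds hksq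
  have EkC : ∀ᶠ n : ℕ in atTop, C^2/(6*((⌊θ * Real.sqrt n⌋₊ : ℕ) : ℝ)^2) ≤ ε/16 :=
    hinv.eventually (eventually_le_nhds (by positivity))
  have h2θ : Tendsto (fun n : ℕ => 2*θ/Real.sqrt n) atTop (nhds 0) :=
    Tendsto.div_atTop tendsto_const_nhds hsqrtT
  have hcminpos : (0:ℝ) < min (δ/2) (min 1 ((3*ε)/(16*(C^2+1)))) := by positivity
  have Esq : ∀ᶠ n : ℕ in atTop,
      2*θ/Real.sqrt n ≤ min (δ/2) (min 1 ((3*ε)/(16*(C^2+1)))) :=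
    h2θ.eventually (eventually_le_nhds hcminpos)
  have Ek1 : ∀ᶠ n : ℕ in atTop, 1 ≤ ⌊θ * Real.sqrt n⌋₊ := hkt.eventually_ge_atTop 1
  have hε₀pos : (0:ℝ) < (ε/8)/(2*C+1) := by positivity
  have Eunif : ∀ᶠ n : ℕ in atTop, ∀ t ∈ Set.Icc (0:ℝ) 1,
      dist (γstar t) (γn n t) < (ε/8)/(2*C+1) :=
    Metric.tendstoUniformlyOn_iff.1 hunif _ hε₀pos
  filter_upwards [EkC, Esq, Ek1, Eunif, eventually_ge_atTop 1] with n hkc hsq hk1 hun hn1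
  set k := ⌊θ * Real.sqrt n⌋₊ with hkdef
  set m := n / (2 * k) with hmdef
  have hNR : (0:ℝ) < (n:ℝ) := by exact_mod_cast hn1
  have hsn : (0:ℝ) < Real.sqrt n := Real.sqrt_pos.2 hNR
  have hkleθ : (k:ℝ) ≤ θ * Real.sqrt n := Nat.floor_le (by positivity)
  have hsq1 : 2*θ/Real.sqrt n ≤ 1 :=
    le_trans hsq (le_trans (min_le_right _ _) (min_le_left _ _))
  have hsqδ : 2*θ/Real.sqrt n ≤ δ/2 := le_trans hsq (min_le_left _ _)
  have hsqε : 2*θ/Real.sqrt n ≤ (3*ε)/(16*(C^2+1)) :=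
    le_trans hsq (le_trans (min_le_right _ _) (min_le_right _ _))
  have hnsq : Real.sqrt n * Real.sqrt n = (n:ℝ) := Real.mul_self_sqrt hNR.le
  have hKN : 2*(k:ℝ)/(n:ℝ) ≤ 2*θ/Real.sqrt n := by
    rw [div_le_div_iff₀ hNR hsn]
    calc 2*(k:ℝ) * Real.sqrt n ≤ 2*(θ*Real.sqrt n)*Real.sqrt n := by nlinarith [hsn.le]
      _ = 2*θ*(Real.sqrt n * Real.sqrt n) := by ring
      _ = 2*θ*(n:ℝ) := by rw [hnsq]
  have h2kn : 2*k ≤ n := by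
    have key : (2*θ/Real.sqrt n)*(n:ℝ) = 2*θ*Real.sqrt n := by
      rw [div_mul_eq_mul_div, div_eq_iff hsn.ne']
      linear_combination (-2*θ) * hnsq
    have hr : 2*(k:ℝ) ≤ (n:ℝ) := by
      have hb : (2*θ/Real.sqrt n)*(n:ℝ) ≤ 1*(n:ℝ) :=
        mul_le_mul_of_nonneg_right hsq1 hNR.le
      rw [key, one_mul] at hb
      nlinarith
    exact_mod_cast hr
  have hk2pos : 0 < 2*k := by omega
  have hm1 : 1 ≤ m := by rw [hmdef]; exact (Nat.one_le_div_iff hk2pos).2 h2kn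
  have hkm : 2*k*m ≤ n := by
    have hle := Nat.div_mul_le_self n (2*k)
    calc 2*k*m = (n/(2*k))*(2*k) := by rw [hmdef]; ring
      _ ≤ n := hle
  have hkm2 : n < 2*k*(m+1) := by
    have h1 := Nat.div_add_mod n (2*k)
    have h2 := Nat.mod_lt n hk2pos
    calc n = 2*k*(n/(2*k)) + n%(2*k) := h1.symm
      _ < 2*k*(n/(2*k)) + 2*k := by omega
      _ = 2*k*(n/(2*k)+1) := by ring
      _ = 2*k*(m+1) := by rw [hmdef]
  have hδ' : ∀ x y : ℝ, |x - y| ≤ 2*(k:ℝ)/(n:ℝ) → |h x - h y| ≤ ε/8 := by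
    intro x y hxy
    have hd : dist x y < δ := by
      rw [Real.dist_eq]
      calc |x-y| ≤ 2*(k:ℝ)/(n:ℝ) := hxy
        _ ≤ 2*θ/Real.sqrt n := hKN
        _ ≤ δ/2 := hsqδ
        _ < δ := by linarith
    have := hδuc hd
    rw [Real.dist_eq] at this
    exact this.le
  have hfg' : ∀ t ∈ Set.Icc (0:ℝ) 1, |(γn n t)^2 - (γstar t)^2| ≤ ε/8 := by
    intro t ht
    have hd := hun t ht
    rw [Real.dist_eq] at hd
    have h1 : |γn n t - γstar t| ≤ (ε/8)/(2*C+1) := by rw [abs_sub_comm]; exact hd.le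
    have h2 : |γn n t + γstar t| ≤ 2*C+1 := by
      calc |γn n t + γstar t| ≤ |γn n t| + |γstar t| := abs_add_le _ _
        _ ≤ 2*C+1 := by
            have ha := hbdd n t ht
            have hb := hbdd_star t ht
            linarith
    calc |(γn n t)^2 - (γstar t)^2| = |γn n t - γstar t| * |γn n t + γstar t| := by
          rw [← abs_mul]; congr 1; ring
      _ ≤ ((ε/8)/(2*C+1)) * (2*C+1) := mul_le_mul h1 h2 (abs_nonneg _) (by positivity)
      _ = ε/8 := by field_simp
  have hkR : (0:ℝ) < (k:ℝ) := by exact_mod_cast hk1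
  have herrC : (2*(k:ℝ)/(3*(n:ℝ)) + 1/(6*(k:ℝ)^2))*C^2 ≤ ε/8 := by
    have e1 : 2*(k:ℝ)/(3*(n:ℝ))*C^2 ≤ ε/16 := by
      have h1 : 2*(k:ℝ)/(3*(n:ℝ)) ≤ (2*θ/Real.sqrt n)/3 := by
        have hh1 : 2*(k:ℝ)/(3*(n:ℝ)) = (2*(k:ℝ)/(n:ℝ))/3 := by ring
        rw [hh1]; linarith
      have h2 : (2*θ/Real.sqrt n)/3 ≤ ε/(16*(C^2+1)) := by
        calc (2*θ/Real.sqrt n)/3 ≤ ((3*ε)/(16*(C^2+1)))/3 := by linarith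
          _ = ε/(16*(C^2+1)) := by ring
      calc 2*(k:ℝ)/(3*(n:ℝ))*C^2 ≤ (ε/(16*(C^2+1)))*C^2 :=
            mul_le_mul_of_nonneg_right (h1.trans h2) (by positivity)
        _ ≤ ε/16 := by
            rw [div_mul_eq_mul_div, div_le_div_iff₀ (by positivity) (by norm_num)]
            nlinarith [hε.le, sq_nonneg C]
    have e2 : 1/(6*(k:ℝ)^2)*C^2 ≤ ε/16 := by
      calc 1/(6*(k:ℝ)^2)*C^2 = C^2/(6*(k:ℝ)^2) := by ring
        _ ≤ ε/16 := hkc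
    calc (2*(k:ℝ)/(3*(n:ℝ)) + 1/(6*(k:ℝ)^2))*C^2
        = 2*(k:ℝ)/(3*(n:ℝ))*C^2 + 1/(6*(k:ℝ)^2)*C^2 := by ring
      _ ≤ ε/16 + ε/16 := add_le_add e1 e2
      _ = ε/8 := by ring
  rw [dist_zero_right, Real.norm_eq_abs]
  have hnonneg : 0 ≤ ∑ i ∈ Finset.Icc 1 m,
      ∫ s in (((2 * (i:ℝ) - 2) * (k : ℝ)) / (n : ℝ))..((2 * (i:ℝ) * (k : ℝ)) / (n : ℝ)),
        |(m : ℝ) * blockWeight (γn n) n k i - (γstar s) ^ 2 / 3| := by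
    refine Finset.sum_nonneg fun i hi => ?_
    have hi1 : 1 ≤ i := (Finset.mem_Icc.1 hi).1
    have hiR : (1:ℝ) ≤ (i:ℝ) := by exact_mod_cast hi1
    refine intervalIntegral.integral_nonneg ?_ (fun u _ => abs_nonneg _)
    gcongr
    nlinarith [hkR.le]
  rw [abs_of_nonneg hnonneg]
  refine lt_of_le_of_lt (main_bound γstar (γn n) h C (ε/8) (ε/8) (ε/8) hmeas_star (hmeas n)
    hhcont hC (by positivity) (by positivity) (by positivity) hbdd_star hfg' n k m hk1 hm1
    hkm hkm2 hδ' hghprop) ?_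
  linarith [herrC]

end MainTheorem
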